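/- In the splits-and-merges setup, assume every value m(y) is invertible and central in R, and that 𝒯 ⊆ R is a G-stable subring containing m(y)^{±1} for all y ∈ Y. With B^𝒯, A^𝒯, C^𝒯 as in the coil Schur duality setup, fix λ, μ ∈ Λ and set A^𝒯_{μλ} := 1_μ * A^𝒯 * 1_λ and C^𝒯_μ := 1_μ * C^𝒯. Define m̃_λ ∈ R_G(X×X) by m̃_λ(x,x') = δ_{x,x'}·e(x)·m(p_λ(x)). Then { h ∈ C^𝒯_μ : h*K_λ = h*m̃_λ } = A^𝒯_{μλ} * M_λ. -/
import Mathlib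


/-!
In the coil Schur duality setup:
`{ h ∈ C^𝒯_μ : h*K_λ = h*m̃_λ } = A^𝒯_{μλ} * M_λ`.
-/

open Finset

section Defs

variable (k : Type*) {G R : Type*} {Λ : Type*}
variable [Field k] [Group G] [Ring R] [Algebra k R]
  [MulSemiringAction G R] [SMulCommClass G k R]
variable [Fintype Λ] [DecidableEq Λ]
variable (Yf : Λ → Type*) [∀ l, Fintype (Yf l)] [∀ l, DecidableEq (Yf l)]
  [∀ l, MulAction G (Yf l)]

/-- The disjoint union `Y = ⨿_λ Y_λ`. -/
abbrev YS := (l : Λ) × Yf l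

/-- Twisted convolution of `R`-valued kernels on `Y × Y`, with twist `e`. -/
noncomputable def conv (e : YS Yf → R) (f g : YS Yf → YS Yf → R) :
    YS Yf → YS Yf → R :=
  fun a b => ∑ c, f a c * Ring.inverse (e c) * g c b

variable (ω : Λ) (p : ∀ l, Yf ω → Yf l) (e : YS Yf → R)

/-- The idempotent `1_λ`, supported on `Y_λ × Y_λ`: `1_λ(y,y') = δ_{y,y'} e(y)`. -/
noncomputable def oneEl (l : Λ) : YS Yf → YS Yf → R :=
  fun a b => if a = b ∧ a.1 = l then e a else 0

/-- The split `S_λ(x,y) = δ_{p_λ(x),y}·e(y)`, supported on `X × Y_λ`. -/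
noncomputable def Sel (l : Λ) : YS Yf → YS Yf → R :=
  fun a b =>
    if h : a.1 = ω ∧ b.1 = l then (if p l (h.1 ▸ a.2) = h.2 ▸ b.2 then e b else 0)
    else 0

/-- The merge `M_λ(y,x) = δ_{y,p_λ(x)}·e(y)`, supported on `Y_λ × X`. -/
noncomputable def Mel (l : Λ) : YS Yf → YS Yf → R :=
  fun a b =>
    if h : a.1 = l ∧ b.1 = ω then (if h.1 ▸ a.2 = p l (h.2 ▸ b.2) then e a else 0)
    else 0

/-- `K_λ(x,x') = δ_{p_λ(x),p_λ(x')}·e(p_λ(x))`, supported on `X × X`. -/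
noncomputable def Kel (l : Λ) : YS Yf → YS Yf → R :=
  fun a b =>
    if h : a.1 = ω ∧ b.1 = ω then
      (if p l (h.1 ▸ a.2) = p l (h.2 ▸ b.2) then e ⟨l, p l (h.1 ▸ a.2)⟩ else 0)
    else 0

/-- The diagonal element `t_ω(x,x') = δ_{x,x'}·e(x)·t(x)`, supported on `X × X`. -/
noncomputable def tEl (t : Yf ω → R) : YS Yf → YS Yf → R :=
  fun a b => if h : a = b ∧ a.1 = ω then e a * t (h.2 ▸ a.2) else 0

/-- `m(y) = ∑_{x ∈ p_λ⁻¹(y)} e(x)⁻¹·e(y)` for `y ∈ Y_λ`. -/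
noncomputable def mval (l : Λ) (y : Yf l) : R :=
  ∑ x : Yf ω, if p l x = y then Ring.inverse (e ⟨ω, x⟩) * e ⟨l, y⟩ else 0

end Defs

/-- The 𝕜-subalgebra `B^𝒯` of the twisted convolution algebra `R_G(X×X)`,
generated by the `K_λ` and the diagonal elements `t_ω` for `G`-equivariant
`𝒯`-valued functions `t` on `X`.  (Membership predicate.) -/
inductive InB (k G : Type*) {R : Type*} {Λ : Type*} [Field k] [Group G] [Ring R]
    [Algebra k R] [MulSemiringAction G R] [SMulCommClass G k R]
    [Fintype Λ] [DecidableEq Λ]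
    (Yf : Λ → Type*) [∀ l, Fintype (Yf l)] [∀ l, DecidableEq (Yf l)]
    [∀ l, MulAction G (Yf l)]
    (ω : Λ) (p : ∀ l, Yf ω → Yf l) (e : YS Yf → R) (T : Subring R) :
    (YS Yf → YS Yf → R) → Prop
  | K (l : Λ) : InB k G Yf ω p e T (Kel Yf ω p e l)
  | t (t : Yf ω → R) (ht : ∀ (g : G) (y : Yf ω), t (g • y) = g • t y)
      (hT : ∀ y, t y ∈ T) : InB k G Yf ω p e T (tEl Yf ω e t)
  | add {f g} : InB k G Yf ω p e T f → InB k G Yf ω p e T g → InB k G Yf ω p e T (f + g)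
  | smul (c : k) {f} : InB k G Yf ω p e T f → InB k G Yf ω p e T (c • f)
  | mul {f g} : InB k G Yf ω p e T f → InB k G Yf ω p e T g →
      InB k G Yf ω p e T (conv Yf e f g)

/-- The 𝕜-subalgebra `A^𝒯` of the twisted convolution algebra
`⊕_{λ,μ} R_G(Y_λ×Y_μ)`, generated by `B^𝒯` and all splits and merges.
(Membership predicate.) -/
inductive InA (k G : Type*) {R : Type*} {Λ : Type*} [Field k] [Group G] [Ring R]
    [Algebra k R] [MulSemiringAction G R] [SMulCommClass G k R]
    [Fintype Λ] [DecidableEq Λ]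
    (Yf : Λ → Type*) [∀ l, Fintype (Yf l)] [∀ l, DecidableEq (Yf l)]
    [∀ l, MulAction G (Yf l)]
    (ω : Λ) (p : ∀ l, Yf ω → Yf l) (e : YS Yf → R) (T : Subring R) :
    (YS Yf → YS Yf → R) → Prop
  | ofB {f} : InB k G Yf ω p e T f → InA k G Yf ω p e T f
  | S (l : Λ) : InA k G Yf ω p e T (Sel Yf ω p e l)
  | M (l : Λ) : InA k G Yf ω p e T (Mel Yf ω p e l)
  | add {f g} : InA k G Yf ω p e T f → InA k G Yf ω p e T g → InA k G Yf ω p e T (f + g)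
  | smul (c : k) {f} : InA k G Yf ω p e T f → InA k G Yf ω p e T (c • f)
  | mul {f g} : InA k G Yf ω p e T f → InA k G Yf ω p e T g →
      InA k G Yf ω p e T (conv Yf e f g)


/-- `m̃_λ(x,x') = δ_{x,x'}·e(x)·m(p_λ(x))`, supported on `X × X`. -/
noncomputable def mtil (k G : Type*) {R : Type*} {Λ : Type*} [Field k] [Group G] [Ring R]
    [Algebra k R] [MulSemiringAction G R] [SMulCommClass G k R]
    [Fintype Λ] [DecidableEq Λ]
    (Yf : Λ → Type*) [∀ l, Fintype (Yf l)] [∀ l, DecidableEq (Yf l)]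
    [∀ l, MulAction G (Yf l)]
    (ω : Λ) (p : ∀ l, Yf ω → Yf l) (e : YS Yf → R) (l : Λ) :
    YS Yf → YS Yf → R :=
  fun a b =>
    if h : a = b ∧ a.1 = ω then e a * mval Yf ω p e l (p l (h.2 ▸ a.2)) else 0

set_option linter.unusedSectionVars false
section Lemmas
variable {R : Type*} {Λ : Type*} [Ring R] [Fintype Λ] [DecidableEq Λ]
variable (Yf : Λ → Type*) [∀ l, Fintype (Yf l)] [∀ l, DecidableEq (Yf l)]
variable (ω : Λ) (p : ∀ l, Yf ω → Yf l) (e : YS Yf → R)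

theorem conv_assoc (f g h : YS Yf → YS Yf → R) :
    conv Yf e (conv Yf e f g) h = conv Yf e f (conv Yf e g h) := by
  funext a b
  simp only [conv, Finset.sum_mul, Finset.mul_sum]
  rw [Finset.sum_comm]
  congr 1; funext c; congr 1; funext d
  simp [mul_assoc]

theorem conv_add_left (f g h : YS Yf → YS Yf → R) :
    conv Yf e (f + g) h = conv Yf e f h + conv Yf e g h := by
  funext a b
  simp [conv, add_mul, Finset.sum_add_distrib]

theorem conv_add_right (f g h : YS Yf → YS Yf → R) :
    conv Yf e f (g + h) = conv Yf e f g + conv Yf e f h := by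
  funext a b
  simp [conv, mul_add, Finset.sum_add_distrib]

theorem conv_smul_left {k : Type*} [Field k] [Algebra k R] (c : k) (f h : YS Yf → YS Yf → R) :
    conv Yf e (c • f) h = c • conv Yf e f h := by
  funext a b
  simp [conv, Finset.smul_sum, smul_mul_assoc]

theorem conv_oneEl_left (heu : ∀ a, IsUnit (e a)) (l : Λ) (f : YS Yf → YS Yf → R) :
    conv Yf e (oneEl Yf e l) f = fun a b => if a.1 = l then f a b else 0 := by
  funext a b
  simp only [conv, oneEl]
  rw [Finset.sum_eq_single a]
  · by_cases h : a.1 = l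
    · rw [if_pos ⟨rfl, h⟩, if_pos h, Ring.mul_inverse_cancel _ (heu a), one_mul]
    · simp [h]
  · intro c _ hc
    rw [if_neg (fun h => hc h.1.symm)]; simp
  · simp

theorem conv_oneEl_right (heu : ∀ a, IsUnit (e a)) (l : Λ) (f : YS Yf → YS Yf → R) :
    conv Yf e f (oneEl Yf e l) = fun a b => if b.1 = l then f a b else 0 := by
  funext a b
  simp only [conv, oneEl]
  rw [Finset.sum_eq_single b]
  · by_cases h : b.1 = l
    · rw [if_pos ⟨rfl, h⟩, if_pos h, mul_assoc, Ring.inverse_mul_cancel _ (heu b), mul_one]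
    · simp [h]
  · intro c _ hc
    rw [if_neg (fun h => hc h.1)]; simp
  · simp

/-- Diagonal element on `Y_l` with values `e(y)·q(y)`. -/
noncomputable def dEl (l : Λ) (q : Yf l → R) : YS Yf → YS Yf → R :=
  fun a b => if h : a = b ∧ a.1 = l then e a * q (h.2 ▸ a.2) else 0

theorem tEl_eq_dEl (t : Yf ω → R) : tEl Yf ω e t = dEl Yf e ω t := rfl

theorem Kel_omega (hpid : ∀ x, p ω x = x) : Kel Yf ω p e ω = oneEl Yf e ω := by
  funext a b
  obtain ⟨la, xa⟩ := a; obtain ⟨lb, xb⟩ := b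
  simp only [Kel, oneEl, hpid]
  by_cases h1 : la = ω
  · subst h1
    by_cases h2 : lb = la
    · subst h2
      simp
    · rw [if_neg (fun hh => h2 (congrArg Sigma.fst hh.1).symm)]
      simp [h2]
  · rw [if_neg (fun hh : _ ∧ la = ω => h1 hh.2), dif_neg (fun hh : la = ω ∧ _ => h1 hh.1)]

theorem Sel_conv_Mel (heu : ∀ a, IsUnit (e a)) (l : Λ) :
    conv Yf e (Sel Yf ω p e l) (Mel Yf ω p e l) = Kel Yf ω p e l := by
  funext a b
  obtain ⟨la, xa⟩ := a; obtain ⟨lb, xb⟩ := b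
  simp only [conv, Sel, Mel, Kel]
  by_cases h1 : la = ω
  · subst h1
    rw [Finset.sum_eq_single (⟨l, p l xa⟩ : YS Yf)]
    · rw [dif_pos ⟨rfl, rfl⟩, if_pos rfl]
      by_cases h2 : lb = la
      · subst h2
        rw [dif_pos ⟨rfl, rfl⟩, dif_pos ⟨rfl, rfl⟩]
        by_cases h3 : p l xa = p l xb
        · rw [if_pos h3, Ring.mul_inverse_cancel _ (heu _), one_mul]
        · rw [if_neg h3, mul_zero]
      · rw [dif_neg (fun hh : _ ∧ lb = la => h2 hh.2),
          dif_neg (fun hh : _ ∧ lb = la => h2 hh.2), mul_zero]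
    · rintro ⟨lc, xc⟩ _ hc
      by_cases h4 : lc = l
      · subst h4
        by_cases h5 : p lc xa = xc
        · exact absurd (by rw [h5]) hc
        · rw [dif_pos ⟨rfl, rfl⟩, if_neg h5, zero_mul, zero_mul]
      · rw [dif_neg (fun hh : _ ∧ lc = l => h4 hh.2), zero_mul, zero_mul]
    · simp
  · rw [dif_neg (fun hh : la = ω ∧ _ => h1 hh.1)]
    apply Finset.sum_eq_zero
    intro c _
    rw [dif_neg (fun hh : la = ω ∧ _ => h1 hh.1), zero_mul, zero_mul]

theorem cancel_mid {u : R} (hu : IsUnit u) (x y : R) :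
    x * Ring.inverse u * (u * y) = x * y := by
  rw [mul_assoc, ← mul_assoc (Ring.inverse u), Ring.inverse_mul_cancel _ hu, one_mul]

theorem cancel_right {u : R} (hu : IsUnit u) (x : R) :
    x * Ring.inverse u * u = x := by
  rw [mul_assoc, Ring.inverse_mul_cancel _ hu, mul_one]

theorem tEl_conv_tEl (heu : ∀ a, IsUnit (e a)) (t1 t2 : Yf ω → R) :
    conv Yf e (tEl Yf ω e t1) (tEl Yf ω e t2)
      = tEl Yf ω e (fun x => t1 x * t2 x) := by
  funext a b
  obtain ⟨la, xa⟩ := a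
  simp only [conv, tEl]
  rw [Finset.sum_eq_single (⟨la, xa⟩ : YS Yf)]
  · by_cases h1 : la = ω
    · subst h1
      by_cases hab : b = (⟨la, xa⟩ : YS Yf)
      · subst hab
        rw [dif_pos ⟨rfl, rfl⟩, dif_pos ⟨rfl, rfl⟩, dif_pos ⟨rfl, rfl⟩,
          cancel_mid (heu _), mul_assoc]
      · have hab' : ¬((⟨la, xa⟩ : YS Yf) = b) := fun h => hab h.symm
        simp [hab']
    · simp [h1]
  · intro c _ hc
    have hc' : ¬((⟨la, xa⟩ : YS Yf) = c) := fun h => hc h.symm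
    simp [hc']
  · simp

theorem Mel_conv_tEl (heu : ∀ a, IsUnit (e a)) (l : Λ) (q : Yf l → R) :
    conv Yf e (Mel Yf ω p e l) (tEl Yf ω e (fun x => q (p l x)))
      = fun a b => if h : a.1 = l ∧ b.1 = ω then
          (if h.1 ▸ a.2 = p l (h.2 ▸ b.2) then e a * q (h.1 ▸ a.2) else 0) else 0 := by
  funext a b
  obtain ⟨la, xa⟩ := a; obtain ⟨lb, xb⟩ := b
  simp only [conv, Mel, tEl]
  rw [Finset.sum_eq_single (⟨lb, xb⟩ : YS Yf)]
  · by_cases h1 : lb = ω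
    · subst h1
      by_cases h2 : la = l
      · subst h2
        rw [dif_pos ⟨rfl, rfl⟩, dif_pos ⟨rfl, rfl⟩, dif_pos ⟨rfl, rfl⟩]
        by_cases h3 : xa = p la xb
        · rw [if_pos h3, if_pos h3, cancel_mid (heu _), h3]
        · rw [if_neg h3, if_neg h3, zero_mul, zero_mul]
      · simp [h2]
    · simp [h1]
  · intro c _ hc
    simp [hc]
  · simp

theorem dEl_conv_Mel (heu : ∀ a, IsUnit (e a)) (l : Λ) (q : Yf l → R) :
    conv Yf e (dEl Yf e l q) (Mel Yf ω p e l)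
      = fun a b => if h : a.1 = l ∧ b.1 = ω then
          (if h.1 ▸ a.2 = p l (h.2 ▸ b.2) then e a * q (h.1 ▸ a.2) else 0) else 0 := by
  funext a b
  obtain ⟨la, xa⟩ := a; obtain ⟨lb, xb⟩ := b
  simp only [conv, dEl, Mel]
  rw [Finset.sum_eq_single (⟨la, xa⟩ : YS Yf)]
  · by_cases h2 : la = l
    · subst h2
      by_cases h1 : lb = ω
      · subst h1
        rw [dif_pos ⟨rfl, rfl⟩, dif_pos ⟨rfl, rfl⟩, dif_pos ⟨rfl, rfl⟩]
        by_cases h3 : xa = p la xb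
        · rw [if_pos h3, if_pos h3, cancel_right (heu _)]
        · rw [if_neg h3, if_neg h3, mul_zero]
      · simp [h1]
    · simp [h2]
  · intro c _ hc
    have hc' : ¬((⟨la, xa⟩ : YS Yf) = c) := fun h => hc h.symm
    simp [hc']
  · simp

/-- Closed form of `M_l * diag(q∘p_l)`. -/
noncomputable def QM (l : Λ) (q : Yf l → R) : YS Yf → YS Yf → R :=
  fun a b => if h : a.1 = l ∧ b.1 = ω then
    (if h.1 ▸ a.2 = p l (h.2 ▸ b.2) then e a * q (h.1 ▸ a.2) else 0) else 0

theorem Mel_conv_tEl' (heu : ∀ a, IsUnit (e a)) (l : Λ) (q : Yf l → R) :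
    conv Yf e (Mel Yf ω p e l) (tEl Yf ω e (fun x => q (p l x)))
      = QM Yf ω p e l q := Mel_conv_tEl Yf ω p e heu l q

theorem dEl_conv_Mel' (heu : ∀ a, IsUnit (e a)) (l : Λ) (q : Yf l → R) :
    conv Yf e (dEl Yf e l q) (Mel Yf ω p e l)
      = QM Yf ω p e l q := dEl_conv_Mel Yf ω p e heu l q

theorem Mel_conv_Kel (heu : ∀ a, IsUnit (e a)) (l : Λ) :
    conv Yf e (Mel Yf ω p e l) (Kel Yf ω p e l)
      = QM Yf ω p e l (mval Yf ω p e l) := by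
  funext a b
  obtain ⟨la, xa⟩ := a; obtain ⟨lb, xb⟩ := b
  simp only [conv, Mel, Kel, QM]
  by_cases h1 : la = l
  · subst h1
    by_cases h2 : lb = ω
    · subst h2
      rw [dif_pos ⟨rfl, rfl⟩, ← Finset.univ_sigma_univ, Finset.sum_sigma]
      rw [Finset.sum_eq_single lb]
      · by_cases h3 : xa = p la xb
        · rw [if_pos h3, mval, Finset.mul_sum]
          apply Finset.sum_congr rfl
          intro xc _
          rw [dif_pos ⟨rfl, rfl⟩, dif_pos ⟨rfl, rfl⟩]
          by_cases hx : p la xc = xa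
          · rw [if_pos hx.symm, if_pos (hx.trans h3), if_pos hx, hx, mul_assoc]
          · rw [if_neg (fun hh => hx hh.symm), if_neg hx, zero_mul, zero_mul, mul_zero]
        · rw [if_neg h3]
          apply Finset.sum_eq_zero
          intro xc _
          rw [dif_pos ⟨rfl, rfl⟩, dif_pos ⟨rfl, rfl⟩]
          by_cases hx : p la xc = xa
          · rw [if_neg (fun hh => h3 (hx.symm.trans hh)), mul_zero]
          · rw [if_neg (fun hh => hx hh.symm), zero_mul, zero_mul]
      · intro lc _ hlc
        apply Finset.sum_eq_zero
        intro xc _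
        rw [dif_neg (fun hh : lc = lb ∧ _ => hlc hh.1), mul_zero]
      · simp
    · rw [dif_neg (fun hh : _ ∧ lb = ω => h2 hh.2)]
      apply Finset.sum_eq_zero
      intro c _
      rw [dif_neg (fun hh : _ ∧ lb = ω => h2 hh.2), mul_zero]
  · rw [dif_neg (fun hh : la = l ∧ _ => h1 hh.1)]
    apply Finset.sum_eq_zero
    intro c _
    rw [dif_neg (fun hh : la = l ∧ _ => h1 hh.1), zero_mul, zero_mul]

theorem QM_conv_Sel (l : Λ) (q : Yf l → R) :
    conv Yf e (QM Yf ω p e l q) (Sel Yf ω p e l)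
      = dEl Yf e l (fun y => q y * mval Yf ω p e l y) := by
  funext a b
  obtain ⟨la, xa⟩ := a; obtain ⟨lb, xb⟩ := b
  simp only [conv, QM, Sel, dEl]
  by_cases h1 : la = l
  · subst h1
    by_cases h2 : lb = la
    · subst h2
      by_cases h3 : xa = xb
      · subst h3
        rw [dif_pos ⟨rfl, rfl⟩, mval, Finset.mul_sum, Finset.mul_sum,
          ← Finset.univ_sigma_univ, Finset.sum_sigma]
        rw [Finset.sum_eq_single ω]
        · apply Finset.sum_congr rfl
          intro xc _
          rw [dif_pos ⟨rfl, rfl⟩, dif_pos ⟨rfl, rfl⟩]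
          split_ifs with hx1 hx2 hx2 <;> simp_all [mul_assoc]
        · intro lc _ hlc
          apply Finset.sum_eq_zero
          intro xc _
          rw [dif_neg (fun hh : _ ∧ lc = ω => hlc hh.2), zero_mul, zero_mul]
        · simp
      · rw [dif_neg (fun hh => h3 (sigma_mk_injective hh.1))]
        apply Finset.sum_eq_zero
        rintro ⟨lc, xc⟩ _
        by_cases hlc : lc = ω
        · subst hlc
          rw [dif_pos ⟨rfl, rfl⟩, dif_pos ⟨rfl, rfl⟩]
          split_ifs with hx1 hx2 <;> simp_all
        · rw [dif_neg (fun hh : _ ∧ lc = ω => hlc hh.2), zero_mul, zero_mul]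
    · rw [dif_neg (fun hh : _ ∧ la = la => h2 (congrArg Sigma.fst hh.1).symm)]
      apply Finset.sum_eq_zero
      intro c _
      rw [dif_neg (fun hh : _ ∧ lb = la => h2 hh.2), mul_zero]
  · rw [dif_neg (fun hh : _ ∧ la = l => h1 hh.2)]
    apply Finset.sum_eq_zero
    intro c _
    rw [dif_neg (fun hh : la = l ∧ _ => h1 hh.1), zero_mul, zero_mul]

theorem conv_oneEl_of_supp (heu : ∀ a, IsUnit (e a)) (l : Λ) (f : YS Yf → YS Yf → R)
    (hf : ∀ a b, b.1 ≠ l → f a b = 0) : conv Yf e f (oneEl Yf e l) = f := by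
  rw [conv_oneEl_right Yf e heu l f]
  funext a b
  by_cases h : b.1 = l
  · simp [h]
  · simp [h, hf a b h]

theorem oneEl_conv_of_supp (heu : ∀ a, IsUnit (e a)) (l : Λ) (f : YS Yf → YS Yf → R)
    (hf : ∀ a b, a.1 ≠ l → f a b = 0) : conv Yf e (oneEl Yf e l) f = f := by
  rw [conv_oneEl_left Yf e heu l f]
  funext a b
  by_cases h : a.1 = l
  · simp [h]
  · simp [h, hf a b h]

theorem oneEl_conv_oneEl (heu : ∀ a, IsUnit (e a)) (l : Λ) :
    conv Yf e (oneEl Yf e l) (oneEl Yf e l) = oneEl Yf e l := by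
  apply oneEl_conv_of_supp Yf e heu
  intro a b h
  exact if_neg (fun hh => h hh.2)

theorem Mel_supp_left (l : Λ) : ∀ a b : YS Yf, a.1 ≠ l → Mel Yf ω p e l a b = 0 :=
  fun _ _ h => dif_neg (fun hh => h hh.1)

theorem Mel_supp_right (l : Λ) : ∀ a b : YS Yf, b.1 ≠ ω → Mel Yf ω p e l a b = 0 :=
  fun _ _ h => dif_neg (fun hh => h hh.2)

theorem dEl_supp_right (l : Λ) (q : Yf l → R) :
    ∀ a b : YS Yf, b.1 ≠ l → dEl Yf e l q a b = 0 := by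
  intro a b h
  unfold dEl
  rw [dif_neg]
  rintro ⟨rfl, hl⟩
  exact h hl

theorem conv_supp_right (l : Λ) (f g : YS Yf → YS Yf → R)
    (hg : ∀ c b, b.1 ≠ l → g c b = 0) :
    ∀ a b : YS Yf, b.1 ≠ l → conv Yf e f g a b = 0 := by
  intro a b h
  apply Finset.sum_eq_zero
  intro c _
  rw [hg c b h, mul_zero]

theorem conv_supp_left (l : Λ) (f g : YS Yf → YS Yf → R)
    (hf : ∀ a c, a.1 ≠ l → f a c = 0) :
    ∀ a b : YS Yf, a.1 ≠ l → conv Yf e f g a b = 0 := by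
  intro a b h
  apply Finset.sum_eq_zero
  intro c _
  rw [hf a c h, zero_mul, zero_mul]

theorem conv_zero_left (f : YS Yf → YS Yf → R) : conv Yf e 0 f = 0 := by
  funext a b; simp [conv]

end Lemmas

section GLemmas
variable {k G R : Type*} {Λ : Type*}
variable [Field k] [Group G] [Ring R] [Algebra k R]
  [MulSemiringAction G R] [SMulCommClass G k R]
variable [Fintype Λ] [DecidableEq Λ]
variable (Yf : Λ → Type*) [∀ l, Fintype (Yf l)] [∀ l, DecidableEq (Yf l)]
  [∀ l, MulAction G (Yf l)]

theorem smul_ringInverse (g : G) (r : R) :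
    g • Ring.inverse r = Ring.inverse (g • r) := by
  by_cases h : IsUnit r
  · have h1 : (g • r) * (g • Ring.inverse r) = 1 := by
      rw [← smul_mul', Ring.mul_inverse_cancel _ h, smul_one]
    have h1' : (g • Ring.inverse r) * (g • r) = 1 := by
      rw [← smul_mul', Ring.inverse_mul_cancel _ h, smul_one]
    have hu : IsUnit (g • r) := ⟨⟨g • r, g • Ring.inverse r, h1, h1'⟩, rfl⟩
    calc g • Ring.inverse r
        = (Ring.inverse (g • r) * (g • r)) * (g • Ring.inverse r) := by
          rw [Ring.inverse_mul_cancel _ hu, one_mul]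
      _ = Ring.inverse (g • r) * ((g • r) * (g • Ring.inverse r)) := by rw [mul_assoc]
      _ = Ring.inverse (g • r) := by rw [h1, mul_one]
  · have h2 : ¬IsUnit (g • r) := by
      intro hu
      apply h
      obtain ⟨u, hu'⟩ := hu
      have h3 : r * (g⁻¹ • ((u⁻¹ : Rˣ) : R)) = 1 := by
        have hr : r = g⁻¹ • (g • r) := (inv_smul_smul g r).symm
        rw [hr, ← smul_mul', ← hu', Units.mul_inv, smul_one]
      have h4 : (g⁻¹ • ((u⁻¹ : Rˣ) : R)) * r = 1 := by
        have hr : r = g⁻¹ • (g • r) := (inv_smul_smul g r).symm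
        rw [hr, ← smul_mul', ← hu', Units.inv_mul, smul_one]
      exact ⟨⟨r, _, h3, h4⟩, rfl⟩
    rw [Ring.inverse_non_unit _ h, Ring.inverse_non_unit _ h2, smul_zero]

theorem smul_mval (ω : Λ) (p : ∀ l, Yf ω → Yf l) (e : YS Yf → R)
    (hpequiv : ∀ (l : Λ) (g : G) (x : Yf ω), p l (g • x) = g • p l x)
    (hee : ∀ (g : G) (l : Λ) (y : Yf l), e ⟨l, g • y⟩ = g • e ⟨l, y⟩)
    (l : Λ) (g : G) (y : Yf l) :
    mval Yf ω p e l (g • y) = g • mval Yf ω p e l y := by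
  unfold mval
  rw [Finset.smul_sum]
  refine (Fintype.sum_equiv (MulAction.toPerm g) _ _ ?_).symm
  intro x
  simp only [MulAction.toPerm_apply]
  rw [hpequiv]
  by_cases hx : p l x = y
  · rw [if_pos hx, if_pos (by rw [hx]), smul_mul', smul_ringInverse,
      hee g ω x, hee g l y]
  · rw [if_neg hx, if_neg (fun hh => hx (smul_left_cancel g hh)), smul_zero]

end GLemmas
theorem stmt6 (k : Type*) {G R : Type*} {Λ : Type*} [Field k] [Group G] [Fintype G]
    [Ring R] [Algebra k R] [MulSemiringAction G R] [SMulCommClass G k R]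
    [Fintype Λ] [DecidableEq Λ]
    (Yf : Λ → Type*) [∀ l, Fintype (Yf l)] [∀ l, DecidableEq (Yf l)]
    [∀ l, MulAction G (Yf l)]
    (ω : Λ) (p : ∀ l, Yf ω → Yf l)
    (hpid : ∀ x, p ω x = x)
    (hpsurj : ∀ l, Function.Surjective (p l))
    (hpequiv : ∀ (l : Λ) (g : G) (x : Yf ω), p l (g • x) = g • p l x)
    (e : YS Yf → R)
    (hee : ∀ (g : G) (l : Λ) (y : Yf l), e ⟨l, g • y⟩ = g • e ⟨l, y⟩)
    (heu : ∀ a, IsUnit (e a))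
    (T : Subring R) (hTg : ∀ (g : G) (r : R), r ∈ T → g • r ∈ T)
    (hm_unit : ∀ (l : Λ) (y : Yf l), IsUnit (mval Yf ω p e l y))
    (hm_central : ∀ (l : Λ) (y : Yf l) (r : R),
        mval Yf ω p e l y * r = r * mval Yf ω p e l y)
    (hm_T : ∀ (l : Λ) (y : Yf l), mval Yf ω p e l y ∈ T)
    (hm_inv_T : ∀ (l : Λ) (y : Yf l), Ring.inverse (mval Yf ω p e l y) ∈ T)
    (lam mu : Λ) :
    -- `{ h ∈ C^𝒯_μ : h*K_λ = h*m̃_λ } = A^𝒯_{μλ} * M_λ`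
    {h : YS Yf → YS Yf → R |
      (∃ c ∈ Submodule.span k
          {x | ∃ a, InA k G Yf ω p e T a ∧ x = conv Yf e a (oneEl Yf e ω)},
        h = conv Yf e (oneEl Yf e mu) c) ∧
      conv Yf e h (Kel Yf ω p e lam) = conv Yf e h (mtil k G Yf ω p e lam)} =
    {x : YS Yf → YS Yf → R |
      ∃ a, InA k G Yf ω p e T a ∧
        x = conv Yf e
          (conv Yf e (conv Yf e (oneEl Yf e mu) a) (oneEl Yf e lam))
          (Mel Yf ω p e lam)} := by
  classical
  ext h
  simp only [Set.mem_setOf_eq]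
  constructor
  · rintro ⟨⟨c, hc, hh⟩, hcond⟩
    obtain ⟨a, ha, hca⟩ :
        ∃ a, InA k G Yf ω p e T a ∧ c = conv Yf e a (oneEl Yf e ω) := by
      refine Submodule.span_induction
        (p := fun x _ => ∃ a, InA k G Yf ω p e T a ∧ x = conv Yf e a (oneEl Yf e ω))
        ?_ ?_ ?_ ?_ hc
      · rintro x ⟨a, ha, rfl⟩; exact ⟨a, ha, rfl⟩
      · refine ⟨(0 : k) • Kel Yf ω p e lam,
          InA.smul 0 (InA.ofB (InB.K lam)), ?_⟩
        rw [zero_smul, conv_zero_left]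
      · rintro x y _ _ ⟨a1, ha1, rfl⟩ ⟨a2, ha2, rfl⟩
        exact ⟨a1 + a2, InA.add ha1 ha2, (conv_add_left Yf e a1 a2 _).symm⟩
      · rintro r x _ ⟨a1, ha1, rfl⟩
        exact ⟨r • a1, InA.smul r ha1, (conv_smul_left Yf e r a1 _).symm⟩
    obtain ⟨q', hq'⟩ : ∃ q' : Yf lam → R,
        q' = fun y => Ring.inverse (mval Yf ω p e lam y) := ⟨_, rfl⟩
    obtain ⟨q2, hq2⟩ : ∃ q2 : Yf lam → R,
        q2 = fun y => Ring.inverse (mval Yf ω p e lam y)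
          * Ring.inverse (mval Yf ω p e lam y) := ⟨_, rfl⟩
    obtain ⟨t2, ht2⟩ : ∃ t2 : Yf ω → R, t2 = fun x => q2 (p lam x) := ⟨_, rfl⟩
    obtain ⟨nEl, hnEl⟩ : ∃ n : YS Yf → YS Yf → R,
        n = conv Yf e (Mel Yf ω p e lam)
          (conv Yf e (tEl Yf ω e t2) (Sel Yf ω p e lam)) := ⟨_, rfl⟩
    have E1 : conv Yf e c (oneEl Yf e ω) = c := by
      rw [hca, conv_assoc Yf e a (oneEl Yf e ω) (oneEl Yf e ω),
        oneEl_conv_oneEl Yf e heu ω]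
    have E2 : conv Yf e h (oneEl Yf e ω) = h := by
      rw [hh, conv_assoc Yf e (oneEl Yf e mu) c (oneEl Yf e ω), E1]
    have E3 : conv Yf e (mtil k G Yf ω p e lam)
        (tEl Yf ω e (fun x => q' (p lam x))) = oneEl Yf e ω := by
      rw [show mtil k G Yf ω p e lam
          = tEl Yf ω e (fun x => mval Yf ω p e lam (p lam x)) from rfl,
        tEl_conv_tEl Yf ω e heu]
      funext u v
      simp only [tEl, oneEl, hq']
      by_cases hcnd : u = v ∧ u.1 = ω
      · rw [dif_pos hcnd, if_pos hcnd,
          Ring.mul_inverse_cancel _ (hm_unit lam _), mul_one]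
      · rw [dif_neg hcnd, if_neg hcnd]
    have E4 : nEl = dEl Yf e lam q' := by
      rw [hnEl, ← conv_assoc Yf e (Mel Yf ω p e lam) (tEl Yf ω e t2)
          (Sel Yf ω p e lam), ht2,
        Mel_conv_tEl' Yf ω p e heu lam q2, QM_conv_Sel Yf ω p e lam q2,
        show (fun y => q2 y * mval Yf ω p e lam y) = q' by
          funext y
          simp only [hq2, hq']
          rw [mul_assoc, Ring.inverse_mul_cancel _ (hm_unit lam y), mul_one]]
    have E5 : conv Yf e (Mel Yf ω p e lam) (tEl Yf ω e (fun x => q' (p lam x)))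
        = conv Yf e (dEl Yf e lam q') (Mel Yf ω p e lam) := by
      rw [Mel_conv_tEl' Yf ω p e heu lam q', dEl_conv_Mel' Yf ω p e heu lam q']
    have hnEl_A : InA k G Yf ω p e T nEl := by
      rw [hnEl]
      refine InA.mul (InA.M lam) (InA.mul (InA.ofB (InB.t t2 ?_ ?_)) (InA.S lam))
      · intro g x
        simp only [ht2, hq2]
        rw [hpequiv, smul_mval Yf ω p e hpequiv hee, ← smul_ringInverse,
          ← smul_mul']
      · intro x
        simp only [ht2, hq2]
        exact mul_mem (hm_inv_T lam _) (hm_inv_T lam _)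
    have hc_A : InA k G Yf ω p e T c := by
      have h0 : InA k G Yf ω p e T (conv Yf e a (Kel Yf ω p e ω)) :=
        InA.mul ha (InA.ofB (InB.K ω))
      rwa [Kel_omega Yf ω p e hpid, ← hca] at h0
    have chain : h = conv Yf e
        (conv Yf e (conv Yf e h (Sel Yf ω p e lam)) (dEl Yf e lam q'))
        (Mel Yf ω p e lam) := by
      calc h = conv Yf e h (oneEl Yf e ω) := E2.symm
        _ = conv Yf e h (conv Yf e (mtil k G Yf ω p e lam)
              (tEl Yf ω e (fun x => q' (p lam x)))) := by rw [E3]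
        _ = conv Yf e (conv Yf e h (mtil k G Yf ω p e lam))
              (tEl Yf ω e (fun x => q' (p lam x))) :=
            (conv_assoc Yf e h (mtil k G Yf ω p e lam) _).symm
        _ = conv Yf e (conv Yf e h (Kel Yf ω p e lam))
              (tEl Yf ω e (fun x => q' (p lam x))) := by rw [← hcond]
        _ = conv Yf e (conv Yf e h (conv Yf e (Sel Yf ω p e lam)
              (Mel Yf ω p e lam))) (tEl Yf ω e (fun x => q' (p lam x))) := by
            rw [Sel_conv_Mel Yf ω p e heu lam]
        _ = conv Yf e (conv Yf e (conv Yf e h (Sel Yf ω p e lam))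
              (Mel Yf ω p e lam)) (tEl Yf ω e (fun x => q' (p lam x))) := by
            rw [conv_assoc Yf e h (Sel Yf ω p e lam) (Mel Yf ω p e lam)]
        _ = conv Yf e (conv Yf e h (Sel Yf ω p e lam))
              (conv Yf e (Mel Yf ω p e lam)
                (tEl Yf ω e (fun x => q' (p lam x)))) :=
            conv_assoc Yf e _ (Mel Yf ω p e lam) _
        _ = conv Yf e (conv Yf e h (Sel Yf ω p e lam))
              (conv Yf e (dEl Yf e lam q') (Mel Yf ω p e lam)) := by rw [E5]
        _ = conv Yf e (conv Yf e (conv Yf e h (Sel Yf ω p e lam))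
              (dEl Yf e lam q')) (Mel Yf ω p e lam) :=
            (conv_assoc Yf e _ (dEl Yf e lam q') (Mel Yf ω p e lam)).symm
    refine ⟨conv Yf e (conv Yf e c (Sel Yf ω p e lam)) nEl,
      InA.mul (InA.mul hc_A (InA.S lam)) hnEl_A, ?_⟩
    have hA'col : ∀ u v : YS Yf, v.1 ≠ lam →
        conv Yf e (conv Yf e c (Sel Yf ω p e lam)) nEl u v = 0 := by
      refine conv_supp_right Yf e lam _ nEl ?_
      intro u v hv
      rw [E4]
      exact dEl_supp_right Yf e lam q' u v hv
    have h6 : conv Yf e (conv Yf e (oneEl Yf e mu)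
          (conv Yf e (conv Yf e c (Sel Yf ω p e lam)) nEl)) (oneEl Yf e lam)
        = conv Yf e (oneEl Yf e mu)
          (conv Yf e (conv Yf e c (Sel Yf ω p e lam)) nEl) :=
      conv_oneEl_of_supp Yf e heu lam _
        (conv_supp_right Yf e lam (oneEl Yf e mu) _ hA'col)
    have h7 : conv Yf e (oneEl Yf e mu)
          (conv Yf e (conv Yf e c (Sel Yf ω p e lam)) nEl)
        = conv Yf e (conv Yf e h (Sel Yf ω p e lam)) (dEl Yf e lam q') := by
      rw [E4, ← conv_assoc Yf e (oneEl Yf e mu) (conv Yf e c (Sel Yf ω p e lam))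
          (dEl Yf e lam q'),
        ← conv_assoc Yf e (oneEl Yf e mu) c (Sel Yf ω p e lam), ← hh]
    rw [h6, h7, ← chain]
  · rintro ⟨a, ha, rfl⟩
    have h1 : conv Yf e (oneEl Yf e lam) (Mel Yf ω p e lam) = Mel Yf ω p e lam :=
      oneEl_conv_of_supp Yf e heu lam _ (Mel_supp_left Yf ω p e lam)
    have h2 : conv Yf e (Mel Yf ω p e lam) (oneEl Yf e ω) = Mel Yf ω p e lam :=
      conv_oneEl_of_supp Yf e heu ω _ (Mel_supp_right Yf ω p e lam)
    constructor
    · refine ⟨conv Yf e (conv Yf e a (Mel Yf ω p e lam)) (oneEl Yf e ω),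
        Submodule.subset_span ⟨conv Yf e a (Mel Yf ω p e lam),
          InA.mul ha (InA.M lam), rfl⟩, ?_⟩
      calc conv Yf e (conv Yf e (conv Yf e (oneEl Yf e mu) a) (oneEl Yf e lam))
            (Mel Yf ω p e lam)
          = conv Yf e (conv Yf e (oneEl Yf e mu) a)
              (conv Yf e (oneEl Yf e lam) (Mel Yf ω p e lam)) :=
            conv_assoc Yf e _ (oneEl Yf e lam) (Mel Yf ω p e lam)
        _ = conv Yf e (conv Yf e (oneEl Yf e mu) a) (Mel Yf ω p e lam) := by
            rw [h1]
        _ = conv Yf e (oneEl Yf e mu) (conv Yf e a (Mel Yf ω p e lam)) :=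
            conv_assoc Yf e (oneEl Yf e mu) a (Mel Yf ω p e lam)
        _ = conv Yf e (oneEl Yf e mu)
              (conv Yf e a (conv Yf e (Mel Yf ω p e lam) (oneEl Yf e ω))) := by
            rw [h2]
        _ = conv Yf e (oneEl Yf e mu)
              (conv Yf e (conv Yf e a (Mel Yf ω p e lam)) (oneEl Yf e ω)) := by
            rw [← conv_assoc Yf e a (Mel Yf ω p e lam) (oneEl Yf e ω)]
    · rw [conv_assoc Yf e (conv Yf e (conv Yf e (oneEl Yf e mu) a)
          (oneEl Yf e lam)) (Mel Yf ω p e lam) (Kel Yf ω p e lam),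
        conv_assoc Yf e (conv Yf e (conv Yf e (oneEl Yf e mu) a)
          (oneEl Yf e lam)) (Mel Yf ω p e lam) (mtil k G Yf ω p e lam),
        Mel_conv_Kel Yf ω p e heu lam,
        show mtil k G Yf ω p e lam
          = tEl Yf ω e (fun x => mval Yf ω p e lam (p lam x)) from rfl,
        Mel_conv_tEl' Yf ω p e heu lam (mval Yf ω p e lam)]
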